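/- Suppose an alternating 2-form F on V satisfies k♭ ∧ F = 0 for some nonzero vector k and F ≠ 0, together with F(k,·) = 0, where g is a nondegenerate symmetric bilinear form. Then k is lightlike: g(k,k) = 0. -/
import Mathlib

/-- If a nonzero alternating 2-form `F` satisfies `k♭ ∧ F = 0` and `F(k,·) = 0`
for a nonzero vector `k`, then `k` is lightlike: `g k k = 0`. -/
theorem stmt_6 {V : Type*} [AddCommGroup V] [Module ℝ V]
    (g : V →ₗ[ℝ] V →ₗ[ℝ] ℝ)
    (hsymm : ∀ x y : V, g x y = g y x)
    (hnd : ∀ v : V, (∀ w : V, g v w = 0) → v = 0)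
    (k : V) (hk0 : k ≠ 0)
    (F : V →ₗ[ℝ] V →ₗ[ℝ] ℝ) (hFalt : ∀ v : V, F v v = 0) (hF0 : F ≠ 0)
    (h1 : ∀ u v w : V, g k u * F v w + g k v * F w u + g k w * F u v = 0)
    (h2 : ∀ v : V, F k v = 0) :
    g k k = 0 := by
  -- F is antisymmetric
  have hanti : ∀ v w : V, F v w = -F w v := by
    intro v w
    have h := hFalt (v + w)
    simp [map_add, hFalt] at h
    linarith
  -- there exist v, w with F v w ≠ 0
  obtain ⟨v, hv⟩ : ∃ v, F v ≠ 0 := by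
    by_contra h
    push_neg at h
    exact hF0 (LinearMap.ext fun v => h v)
  obtain ⟨w, hw⟩ : ∃ w, F v w ≠ 0 := by
    by_contra h
    push_neg at h
    exact hv (LinearMap.ext h)
  have key := h1 k v w
  have hwk : F w k = 0 := by rw [hanti]; simp [h2]
  rw [h2, hwk] at key
  have : g k k * F v w = 0 := by linarith
  exact (mul_eq_zero.mp this).resolve_right hw
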